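/- Let q be a power of 2 and n ≥ 1 an odd integer. Then ν₂(ord_n(q)) = max over prime divisors p of n of ν₂(ord_p(q)), where ord_m(q) denotes the multiplicative order of q modulo m and ν₂ is the 2-adic valuation. -/
import Mathlib

private lemma aux_lift_one (p : ℕ) (x : ℤ) (h : (p : ℤ) ∣ x - 1) (k : ℕ) :
    (p : ℤ) ^ (k + 1) ∣ x ^ (p ^ k) - 1 := by
  induction k with
  | zero => simpa using h
  | succ k ih =>
    have hy : (p : ℤ) ∣ x ^ (p ^ k) - 1 :=
      (dvd_pow_self (p : ℤ) (Nat.succ_ne_zero k)).trans ih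
    have h1 : ((x : ZMod p)) ^ (p ^ k) = 1 := by
      have h0 := (ZMod.intCast_zmod_eq_zero_iff_dvd _ p).mpr hy
      push_cast at h0
      linear_combination h0
    have hsum : (p : ℤ) ∣ ∑ i ∈ Finset.range p, (x ^ (p ^ k)) ^ i := by
      rw [← ZMod.intCast_zmod_eq_zero_iff_dvd]
      push_cast
      rw [h1]
      simp [ZMod.natCast_self]
    have key : (∑ i ∈ Finset.range p, (x ^ (p ^ k)) ^ i) * (x ^ (p ^ k) - 1)
        = x ^ (p ^ (k + 1)) - 1 := by
      rw [geom_sum_mul, ← pow_mul, ← pow_succ]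
    have : (p : ℤ) ^ (k + 2) = (p : ℤ) * (p : ℤ) ^ (k + 1) := by ring
    rw [← key, this]
    exact mul_dvd_mul hsum ih

private lemma aux_order_pp (q p k : ℕ) :
    orderOf (q : ZMod (p ^ (k + 1))) ∣ orderOf (q : ZMod p) * p ^ k := by
  set r := orderOf (q : ZMod p) with hr
  have h1 : (p : ℤ) ∣ (q : ℤ) ^ r - 1 := by
    rw [← ZMod.intCast_zmod_eq_zero_iff_dvd]
    push_cast
    rw [hr, pow_orderOf_eq_one, sub_self]
  have h2 := aux_lift_one p ((q : ℤ) ^ r) h1 k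
  apply orderOf_dvd_of_pow_eq_one
  have h3 : (((q : ℤ) ^ (r * p ^ k) - 1 : ℤ) : ZMod (p ^ (k + 1))) = 0 := by
    rw [ZMod.intCast_zmod_eq_zero_iff_dvd]
    rw [← pow_mul] at h2
    exact_mod_cast h2
  push_cast at h3
  linear_combination h3

private lemma aux_val_mono (a b : ℕ) (hb : b ≠ 0) (h : a ∣ b) :
    padicValNat 2 a ≤ padicValNat 2 b := by
  haveI : Fact (Nat.Prime 2) := ⟨Nat.prime_two⟩
  rw [← padicValNat_dvd_iff_le hb]
  exact dvd_trans pow_padicValNat_dvd h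

private lemma aux_two_mul_dvd (a b : ℕ) (ha : a ≠ 0) (hb : b ≠ 0) (hab : a ∣ b)
    (h : padicValNat 2 a < padicValNat 2 b) : 2 * a ∣ b := by
  rw [← Nat.factorization_le_iff_dvd (Nat.mul_ne_zero two_ne_zero ha) hb]
  rw [Nat.factorization_mul two_ne_zero ha]
  intro p
  rcases eq_or_ne p 2 with rfl | hp2
  · have e2 : (Nat.factorization 2) 2 = 1 := by
      rw [Nat.Prime.factorization Nat.prime_two]; simp
    simp only [Finsupp.coe_add, Pi.add_apply, e2]
    rw [Nat.factorization_def a Nat.prime_two, Nat.factorization_def b Nat.prime_two]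
    omega
  · have e2 : (Nat.factorization 2) p = 0 := by
      rw [Nat.Prime.factorization Nat.prime_two]
      simp [Finsupp.single_apply, hp2, Ne.symm hp2]
    simp only [Finsupp.coe_add, Pi.add_apply, e2, zero_add]
    exact (Nat.factorization_le_iff_dvd ha hb).mpr hab p

private lemma aux_order_pos (q m : ℕ) (hm : 0 < m) (h : Nat.Coprime q m) :
    0 < orderOf (q : ZMod m) := by
  haveI : NeZero m := ⟨hm.ne'⟩
  have hcast : (q : ZMod m) = ((ZMod.unitOfCoprime q h : (ZMod m)ˣ) : ZMod m) :=
    (ZMod.coe_unitOfCoprime q h).symm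
  rw [hcast, orderOf_units]
  exact orderOf_pos _

/-- Let `q` be a power of `2` and `n ≥ 1` an odd integer.  Then the `2`-adic valuation of the
multiplicative order of `q` modulo `n` is the maximum, over the prime divisors `p` of `n`, of
the `2`-adic valuation of the multiplicative order of `q` modulo `p`. -/
theorem stmt_0 (q n e : ℕ) (hq : q = 2 ^ e) (hn : Odd n) (hn1 : 1 ≤ n) :
    padicValNat 2 (orderOf (q : ZMod n)) =
      n.primeFactors.sup (fun p => padicValNat 2 (orderOf (q : ZMod p))) := by
  have hn0 : n ≠ 0 := by omega
  have hqn : Nat.Coprime q n := by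
    rw [hq]
    exact Nat.Coprime.pow_left e hn.coprime_two_left
  set d := orderOf (q : ZMod n) with hd
  have hd0 : 0 < d := aux_order_pos q n hn1 hqn
  refine le_antisymm ?_ (Finset.sup_le fun p hp => ?_)
  · -- hard direction
    by_contra hlt
    push_neg at hlt
    set t := padicValNat 2 d with ht'
    have ht : 1 ≤ t := lt_of_le_of_lt (Nat.zero_le _) hlt
    have h2d : 2 ∣ d := by
      haveI : Fact (Nat.Prime 2) := ⟨Nat.prime_two⟩
      exact dvd_trans (dvd_pow_self 2 (by omega : t ≠ 0)) (pow_padicValNat_dvd (p := 2) (n := d))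
    have hd2 : 2 ≤ d := Nat.le_of_dvd hd0 h2d
    have hq2 : 2 ≤ q := by
      rcases Nat.eq_zero_or_pos e with he | he
      · exfalso
        have hq1 : q = 1 := by rw [hq, he, pow_zero]
        rw [hq1] at hd
        simp at hd
        omega
      · rw [hq]
        calc 2 = 2 ^ 1 := by norm_num
        _ ≤ 2 ^ e := Nat.pow_le_pow_right (by norm_num) he
    set m := d / 2 with hm
    have hdm : d = 2 * m := (Nat.div_mul_cancel h2d).symm ▸ by omega
    have hm1 : 1 ≤ m := by omega
    have hqm1 : 1 ≤ q ^ m := Nat.one_le_pow _ _ (by omega)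
    have hqmne : q ^ m - 1 ≠ 0 := by
      have h2 : 1 < q ^ m := Nat.one_lt_pow (by omega) hq2
      omega
    have key : ∀ p ∈ n.primeFactors, p ^ (n.factorization p) ∣ q ^ m - 1 := by
      intro p hp
      have hpp : p.Prime := Nat.prime_of_mem_primeFactors hp
      have hpd : p ∣ n := Nat.dvd_of_mem_primeFactors hp
      set k := n.factorization p with hk
      have hk1 : 1 ≤ k := hpp.factorization_pos_of_dvd hn0 hpd
      have hpkd : p ^ k ∣ n := Nat.ordProj_dvd n p
      set a := orderOf (q : ZMod (p ^ k)) with ha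
      -- a ∣ d
      have hdvd1 : a ∣ d := by
        have := orderOf_map_dvd (ZMod.castHom hpkd (ZMod (p ^ k))).toMonoidHom
          ((q : ZMod n))
        simpa [map_natCast] using this
      -- 2-adic valuation bound on a
      have hdvd2 : a ∣ orderOf (q : ZMod p) * p ^ (k - 1) := by
        have h := aux_order_pp q p (k - 1)
        rwa [Nat.sub_add_cancel hk1] at h
      have hop0 : orderOf (q : ZMod p) ≠ 0 := by
        have hcop : Nat.Coprime q p := Nat.Coprime.coprime_dvd_right hpd hqn
        exact (aux_order_pos q p hpp.pos hcop).ne'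
      have hrhs0 : orderOf (q : ZMod p) * p ^ (k - 1) ≠ 0 :=
        Nat.mul_ne_zero hop0 (pow_ne_zero _ hpp.pos.ne')
      have hpodd : ¬ (2 ∣ p ^ (k - 1)) := by
        intro h2p
        have : 2 ∣ n := dvd_trans ((Nat.prime_two.prime.dvd_of_dvd_pow h2p)) hpd
        exact (Nat.not_even_iff_odd.mpr hn) (even_iff_two_dvd.mpr this)
      have hva : padicValNat 2 a < t := by
        have h1 : padicValNat 2 a ≤ padicValNat 2 (orderOf (q : ZMod p) * p ^ (k - 1)) :=
          aux_val_mono _ _ hrhs0 hdvd2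
        have h2 : padicValNat 2 (orderOf (q : ZMod p) * p ^ (k - 1))
            = padicValNat 2 (orderOf (q : ZMod p)) := by
          rw [padicValNat.mul hop0 (pow_ne_zero _ hpp.pos.ne'),
            padicValNat.eq_zero_of_not_dvd hpodd, add_zero]
        have h3 : padicValNat 2 (orderOf (q : ZMod p)) ≤
            n.primeFactors.sup (fun p => padicValNat 2 (orderOf (q : ZMod p))) :=
          Finset.le_sup (f := fun p => padicValNat 2 (orderOf ((q : ℕ) : ZMod p))) hp
        omega
      have ha0 : a ≠ 0 := ne_zero_of_dvd_ne_zero hd0.ne' hdvd1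
      have h2a : 2 * a ∣ d := aux_two_mul_dvd a d ha0 hd0.ne' hdvd1 hva
      have ham : a ∣ m := by
        rw [hdm] at h2a
        exact (mul_dvd_mul_iff_left (two_ne_zero)).mp h2a
      -- q^m ≡ 1 mod p^k
      have hone : (q : ZMod (p ^ k)) ^ m = 1 := orderOf_dvd_iff_pow_eq_one.mp ham
      have : ((q ^ m - 1 : ℕ) : ZMod (p ^ k)) = 0 := by
        rw [Nat.cast_sub hqm1]
        push_cast
        rw [hone, sub_self]
      exact (ZMod.natCast_eq_zero_iff _ _).mp this
    have hn_dvd : n ∣ q ^ m - 1 := by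
      rw [← Nat.factorization_le_iff_dvd hn0 hqmne]
      intro p
      by_cases hp : p ∈ n.primeFactors
      · have hpp : p.Prime := Nat.prime_of_mem_primeFactors hp
        exact (hpp.pow_dvd_iff_le_factorization hqmne).mp (key p hp)
      · have : n.factorization p = 0 := by
          rw [← Finsupp.notMem_support_iff, Nat.support_factorization]
          exact hp
        simp [this]
    have hqm : (q : ZMod n) ^ m = 1 := by
      have h0 : ((q ^ m - 1 : ℕ) : ZMod n) = 0 :=
        (ZMod.natCast_eq_zero_iff _ _).mpr hn_dvd
      rw [Nat.cast_sub hqm1] at h0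
      push_cast at h0
      linear_combination h0
    have hdvdm : d ∣ m := orderOf_dvd_of_pow_eq_one hqm
    have := Nat.le_of_dvd (by omega) hdvdm
    omega
  · -- easy direction
    have hpd : p ∣ n := Nat.dvd_of_mem_primeFactors hp
    have hdvd : orderOf (q : ZMod p) ∣ d := by
      have := orderOf_map_dvd (ZMod.castHom hpd (ZMod p)).toMonoidHom ((q : ZMod n))
      simpa [map_natCast] using this
    exact aux_val_mono _ _ hd0.ne' hdvd
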